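/- Let N ≥ 1 and n ≥ 1 be integers, let a_1,…,a_N ∈ ℝ^n with ‖a_i‖ ≤ κ for all i, where κ > 0, and set ā := (1/N) Σ_{i=1}^N a_i. Let ε > 0, t ∈ (0,1), and let M be a positive integer with M ≥ (4κ/ε)(2κ/ε + 1/3) · log((n+1)/t). Let Z_1,…,Z_M be independent random variables on a probability space, each uniformly distributed on {1,…,N}. Then Pr[ ‖ (1/M) Σ_{u=1}^M a_{Z_u} − ā ‖ ≥ ε ] ≤ t; equivalently, with probability at least 1 − t the subsampled average approximates ā within ε in Euclidean norm. -/

import Mathlib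

open MeasureTheory ProbabilityTheory RealInnerProductSpace

/-- Core analytic inequality behind Hoeffding's lemma. -/
lemma hcore (p : ℝ) (hp0 : 0 ≤ p) (hp1 : p ≤ 1) (h : ℝ) :
    (1 - p) * Real.exp (-p * h) + p * Real.exp ((1 - p) * h) ≤ Real.exp (h ^ 2 / 8) := by
  have hD : ∀ x : ℝ, 0 < 1 - p + p * Real.exp x := by
    intro x
    rcases lt_or_eq_of_le hp1 with h1 | h1
    · nlinarith [Real.exp_pos x]
    · subst h1; simpa using Real.exp_pos x
  set D : ℝ → ℝ := fun x => 1 - p + p * Real.exp x with hDdef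
  set φ : ℝ → ℝ := fun x => x ^ 2 / 8 + p * x - Real.log (D x) with hφdef
  set ψ : ℝ → ℝ := fun x => x / 4 + p - p * Real.exp x / D x with hψdef
  have hDd : ∀ x, HasDerivAt D (p * Real.exp x) x := fun x => by
    exact ((Real.hasDerivAt_exp x).const_mul p).const_add (1 - p)
  have hφd : ∀ x, HasDerivAt φ (ψ x) x := by
    intro x
    have h1 : HasDerivAt (fun x : ℝ => x ^ 2 / 8 + p * x) (x / 4 + p) x := by
      exact (((hasDerivAt_pow 2 x).div_const 8).add ((hasDerivAt_id x).const_mul p)).congr_deriv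
        (by push_cast; ring)
    have h2 : HasDerivAt (fun x => Real.log (D x)) (p * Real.exp x / D x) x :=
      (hDd x).log (ne_of_gt (hD x))
    exact h1.sub h2
  have hψd : ∀ x, HasDerivAt ψ (1 / 4 - p * Real.exp x * (1 - p) / (D x) ^ 2) x := by
    intro x
    have hnum : HasDerivAt (fun x => p * Real.exp x) (p * Real.exp x) x :=
      (Real.hasDerivAt_exp x).const_mul p
    have hq := hnum.div (hDd x) (ne_of_gt (hD x))
    have h1 : HasDerivAt (fun x : ℝ => x / 4 + p) (1 / 4) x :=
      ((hasDerivAt_id x).div_const 4).add_const p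
    have h2 := h1.sub hq
    have heq : (1 / 4 - (p * Real.exp x * D x - p * Real.exp x * (p * Real.exp x)) / (D x) ^ 2 : ℝ)
        = 1 / 4 - p * Real.exp x * (1 - p) / (D x) ^ 2 := by
      have hx : D x = 1 - p + p * Real.exp x := rfl
      rw [hx]; ring_nf
    rw [heq] at h2
    exact h2
  have hψ0 : ψ 0 = 0 := by
    have : D 0 = 1 := by simp [hDdef]
    simp [hψdef, this]
  have hψmono : Monotone ψ := by
    refine monotone_of_deriv_nonneg (fun x => (hψd x).differentiableAt) ?_
    intro x
    rw [(hψd x).deriv]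
    have hDx := hD x
    have hxd : p * Real.exp x * (1 - p) / (D x) ^ 2 ≤ 1 / 4 := by
      rw [div_le_iff₀ (by positivity)]
      have hx : D x = 1 - p + p * Real.exp x := rfl
      nlinarith [sq_nonneg (1 - p - p * Real.exp x)]
    linarith
  have hφ0 : φ 0 = 0 := by
    have : D 0 = 1 := by simp [hDdef]
    simp [hφdef, this]
  have hφcont : Continuous φ := by
    have : Differentiable ℝ φ := fun x => (hφd x).differentiableAt
    exact this.continuous
  have hφnonneg : ∀ x : ℝ, 0 ≤ φ x := by
    intro x
    rcases le_total 0 x with hx | hx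
    · have hmono : MonotoneOn φ (Set.Ici (0:ℝ)) := by
        refine monotoneOn_of_deriv_nonneg (convex_Ici 0) hφcont.continuousOn
          (fun y _ => (hφd y).differentiableAt.differentiableWithinAt) ?_
        intro y hy
        rw [interior_Ici] at hy
        rw [(hφd y).deriv]
        have := hψmono (le_of_lt hy)
        rw [hψ0] at this
        exact this
      have := hmono (Set.self_mem_Ici) (Set.mem_Ici.2 hx) hx
      rwa [hφ0] at this
    · have hanti : AntitoneOn φ (Set.Iic (0:ℝ)) := by
        refine antitoneOn_of_deriv_nonpos (convex_Iic 0) hφcont.continuousOn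
          (fun y _ => (hφd y).differentiableAt.differentiableWithinAt) ?_
        intro y hy
        rw [interior_Iic] at hy
        rw [(hφd y).deriv]
        have := hψmono (le_of_lt hy)
        rw [hψ0] at this
        exact this
      have := hanti (Set.mem_Iic.2 hx) (Set.self_mem_Iic) hx
      rwa [hφ0] at this
  -- conclude
  have hlog : Real.log (D h) ≤ h ^ 2 / 8 + p * h := by
    have := hφnonneg h
    simp only [hφdef] at this
    linarith
  have hDle : D h ≤ Real.exp (h ^ 2 / 8 + p * h) := by
    calc D h = Real.exp (Real.log (D h)) := (Real.exp_log (hD h)).symm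
    _ ≤ Real.exp (h ^ 2 / 8 + p * h) := Real.exp_le_exp.2 hlog
  have hLHS : (1 - p) * Real.exp (-p * h) + p * Real.exp ((1 - p) * h)
      = Real.exp (-p * h) * D h := by
    have h1 : ((1 - p) * h : ℝ) = -p * h + h := by ring
    rw [h1, Real.exp_add]
    simp only [hDdef]
    ring
  rw [hLHS]
  calc Real.exp (-p * h) * D h ≤ Real.exp (-p * h) * Real.exp (h ^ 2 / 8 + p * h) :=
        mul_le_mul_of_nonneg_left hDle (le_of_lt (Real.exp_pos _))
  _ = Real.exp (h ^ 2 / 8) := by rw [← Real.exp_add]; ring_nf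

/-- Hoeffding's lemma for a uniform random variable on `Fin K`. -/
lemma hoeff_sum {K : ℕ} (hK : 0 < K) (V : Fin K → ℝ) (c lam : ℝ)
    (hmean : ∑ i, V i = 0) (hosc : ∀ i j, V i - V j ≤ c) :
    ∑ i, Real.exp (lam * V i) ≤ K * Real.exp (lam ^ 2 * c ^ 2 / 8) := by
  have : Nonempty (Fin K) := ⟨⟨0, hK⟩⟩
  have hc0 : 0 ≤ c := by simpa using hosc ⟨0, hK⟩ ⟨0, hK⟩
  obtain ⟨i0, hi0⟩ := Finite.exists_min V
  obtain ⟨i1, hi1⟩ := Finite.exists_max V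
  set A := V i0 with hA
  set B := V i1 with hB
  have hAB : A ≤ B := le_trans (hi0 i1) (le_refl _)
  have hBA : B - A ≤ c := hosc i1 i0
  have hA0 : A ≤ 0 := by
    by_contra hcon
    push_neg at hcon
    have : (0:ℝ) < ∑ i, V i := by
      have : ∀ i ∈ Finset.univ, (0:ℝ) < V i := fun i _ => lt_of_lt_of_le hcon (hi0 i)
      exact Finset.sum_pos this ⟨⟨0, hK⟩, Finset.mem_univ _⟩
    linarith [hmean]
  have hB0 : 0 ≤ B := by
    by_contra hcon
    push_neg at hcon
    have : ∑ i, V i < 0 := by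
      have : ∀ i ∈ Finset.univ, V i < (0:ℝ) := fun i _ => lt_of_le_of_lt (hi1 i) hcon
      exact Finset.sum_neg this ⟨⟨0, hK⟩, Finset.mem_univ _⟩
    linarith [hmean]
  have hexp18 : (1:ℝ) ≤ Real.exp (lam ^ 2 * c ^ 2 / 8) := Real.one_le_exp (by positivity)
  rcases eq_or_lt_of_le hAB with heq | hlt
  · -- A = B, so V ≡ 0
    have hV0 : ∀ i, V i = 0 := by
      intro i
      have h1 := hi0 i
      have h2 := hi1 i
      have : A = 0 := le_antisymm hA0 (heq ▸ hB0)
      rw [this] at h1; rw [← heq, this] at h2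
      linarith
    simp only [hV0, mul_zero, Real.exp_zero]
    simpa using mul_le_mul_of_nonneg_left hexp18 (by positivity : (0:ℝ) ≤ (K:ℝ))
  · -- A < B
    have hd : (0:ℝ) < B - A := by linarith
    set p := -A / (B - A) with hp
    have hp0 : 0 ≤ p := div_nonneg (by linarith) (le_of_lt hd)
    have hp1 : p ≤ 1 := by
      rw [div_le_one hd]; linarith
    -- convexity bound for each i
    have hconv : ∀ i, Real.exp (lam * V i) ≤
        (B - V i) / (B - A) * Real.exp (lam * A) + (V i - A) / (B - A) * Real.exp (lam * B) := by
      intro i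
      have hmemA : A ≤ V i := hi0 i
      have hmemB : V i ≤ B := hi1 i
      have ha : (0:ℝ) ≤ (B - V i) / (B - A) := div_nonneg (by linarith) (le_of_lt hd)
      have hb : (0:ℝ) ≤ (V i - A) / (B - A) := div_nonneg (by linarith) (le_of_lt hd)
      have hab : (B - V i) / (B - A) + (V i - A) / (B - A) = 1 := by
        field_simp
        ring
      have hcv := convexOn_exp.2 (Set.mem_univ (lam * A)) (Set.mem_univ (lam * B)) ha hb hab
      simp only [smul_eq_mul] at hcv
      have harg : (B - V i) / (B - A) * (lam * A) + (V i - A) / (B - A) * (lam * B)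
          = lam * V i := by
        field_simp
        ring
      rw [harg] at hcv
      exact hcv
    calc ∑ i, Real.exp (lam * V i)
        ≤ ∑ i, ((B - V i) / (B - A) * Real.exp (lam * A)
            + (V i - A) / (B - A) * Real.exp (lam * B)) :=
          Finset.sum_le_sum fun i _ => hconv i
    _ = (K * B - 0) / (B - A) * Real.exp (lam * A) + (0 - K * A) / (B - A) * Real.exp (lam * B) := by
          rw [Finset.sum_add_distrib, ← Finset.sum_mul, ← Finset.sum_mul, ← Finset.sum_div,
            ← Finset.sum_div, Finset.sum_sub_distrib, Finset.sum_sub_distrib, hmean]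
          simp [Finset.card_univ]
    _ = K * ((1 - p) * Real.exp (-p * (lam * (B - A)))
            + p * Real.exp ((1 - p) * (lam * (B - A)))) := by
          have h1 : (1 - p : ℝ) = B / (B - A) := by
            rw [hp]; field_simp; ring
          have h2 : (-p * (lam * (B - A)) : ℝ) = lam * A := by
            rw [hp]; field_simp
          have h3 : ((1 - p) * (lam * (B - A)) : ℝ) = lam * B := by
            rw [h1]; field_simp
          rw [h2, h3, h1, hp]
          field_simp
          ring
    _ ≤ K * Real.exp ((lam * (B - A)) ^ 2 / 8) := by
          refine mul_le_mul_of_nonneg_left ?_ (by positivity)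
          exact hcore p hp0 hp1 _
    _ ≤ K * Real.exp (lam ^ 2 * c ^ 2 / 8) := by
          refine mul_le_mul_of_nonneg_left (Real.exp_le_exp.2 ?_) (by positivity)
          have : (B - A) ^ 2 ≤ c ^ 2 := pow_le_pow_left₀ (by linarith) hBA 2
          have h4 : (lam * (B - A)) ^ 2 = lam ^ 2 * (B - A) ^ 2 := by ring
          rw [h4]
          have := mul_le_mul_of_nonneg_left this (sq_nonneg lam)
          linarith

noncomputable def Em (K m : ℕ) (f : (Fin m → Fin K) → ℝ) : ℝ :=
  (∑ z : Fin m → Fin K, f z) / (K : ℝ) ^ m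

lemma mgf_bound {K : ℕ} (hK : 0 < K) (c lam : ℝ) :
    ∀ (m : ℕ) (f : (Fin m → Fin K) → ℝ),
    (∀ (k : Fin m) (z z' : Fin m → Fin K), (∀ j, j ≠ k → z j = z' j) → f z - f z' ≤ c) →
    ∑ z : Fin m → Fin K, Real.exp (lam * (f z - Em K m f))
      ≤ (K : ℝ) ^ m * Real.exp (m * (lam ^ 2 * c ^ 2 / 8)) := by
  have hKR : (0:ℝ) < (K:ℝ) := by exact_mod_cast hK
  intro m
  induction m with
  | zero =>
    intro f _
    have h1 : ∀ (F : (Fin 0 → Fin K) → ℝ), ∑ z, F z = F default :=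
      fun F => Fintype.sum_subsingleton F default
    rw [h1]
    norm_num [Em, h1]
  | succ m ih =>
    intro f hbd
    set e := Fin.consEquiv (fun _ : Fin (m+1) => Fin K) with he
    have hsum : ∀ (F : (Fin (m+1) → Fin K) → ℝ),
        ∑ z, F z = ∑ i : Fin K, ∑ y : Fin m → Fin K, F (Fin.cons i y) := by
      intro F
      rw [← Equiv.sum_comp e F, Fintype.sum_prod_type]
      rfl
    set g : (Fin m → Fin K) → ℝ := fun y => (∑ i : Fin K, f (Fin.cons i y)) / K with hgdef
    have hEg : Em K (m+1) f = Em K m g := by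
      simp only [Em]
      rw [hsum f, Finset.sum_comm]
      rw [show (∑ y : Fin m → Fin K, g y) = (∑ y : Fin m → Fin K, ∑ i, f (Fin.cons i y)) / K
        from (Finset.sum_div _ _ _).symm]
      rw [div_div, pow_succ]
      ring_nf
    have hg : ∀ (k : Fin m) (y y' : Fin m → Fin K),
        (∀ j, j ≠ k → y j = y' j) → g y - g y' ≤ c := by
      intro k y y' hyy
      have hterm : ∀ i : Fin K, f (Fin.cons i y) - f (Fin.cons i y') ≤ c := by
        intro i
        refine hbd k.succ _ _ ?_
        intro j hj
        rcases Fin.eq_zero_or_eq_succ j with h0 | ⟨l, rfl⟩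
        · subst h0; simp
        · simp only [Fin.cons_succ]
          exact hyy l (fun hl => hj (by rw [hl]))
      simp only [hgdef]
      rw [div_sub_div_same]
      rw [div_le_iff₀ hKR]
      rw [← Finset.sum_sub_distrib]
      calc ∑ i : Fin K, (f (Fin.cons i y) - f (Fin.cons i y'))
          ≤ ∑ _i : Fin K, c := Finset.sum_le_sum fun i _ => hterm i
      _ = c * K := by simp [mul_comm]
    have hinner : ∀ y : Fin m → Fin K,
        ∑ i : Fin K, Real.exp (lam * (f (Fin.cons i y) - g y))
          ≤ K * Real.exp (lam ^ 2 * c ^ 2 / 8) := by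
      intro y
      refine hoeff_sum hK (fun i => f (Fin.cons i y) - g y) c lam ?_ ?_
      · rw [Finset.sum_sub_distrib]
        simp only [hgdef, Finset.sum_const, Finset.card_univ, Fintype.card_fin, nsmul_eq_mul]
        field_simp
        ring
      · intro i j
        have hagree : ∀ j' : Fin (m+1), j' ≠ 0 →
            (Fin.cons i y : Fin (m+1) → Fin K) j' = (Fin.cons j y : Fin (m+1) → Fin K) j' := by
          intro j' hj'
          rcases Fin.eq_zero_or_eq_succ j' with h0 | ⟨l, rfl⟩
          · exact absurd h0 hj'
          · simp [Fin.cons_succ]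
        have := hbd 0 (Fin.cons i y) (Fin.cons j y) hagree
        show f (Fin.cons i y) - g y - (f (Fin.cons j y) - g y) ≤ c
        linarith
    calc ∑ z : Fin (m+1) → Fin K, Real.exp (lam * (f z - Em K (m+1) f))
        = ∑ i : Fin K, ∑ y : Fin m → Fin K,
            Real.exp (lam * (f (Fin.cons i y) - Em K m g)) := by
          rw [hEg]; exact hsum _
    _ = ∑ y : Fin m → Fin K, ∑ i : Fin K,
            Real.exp (lam * (f (Fin.cons i y) - g y)) * Real.exp (lam * (g y - Em K m g)) := by
          rw [Finset.sum_comm]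
          refine Finset.sum_congr rfl fun y _ => Finset.sum_congr rfl fun i _ => ?_
          rw [← Real.exp_add]
          ring_nf
    _ = ∑ y : Fin m → Fin K,
            (∑ i : Fin K, Real.exp (lam * (f (Fin.cons i y) - g y)))
              * Real.exp (lam * (g y - Em K m g)) := by
          refine Finset.sum_congr rfl fun y _ => ?_
          rw [Finset.sum_mul]
    _ ≤ ∑ y : Fin m → Fin K,
            (K * Real.exp (lam ^ 2 * c ^ 2 / 8)) * Real.exp (lam * (g y - Em K m g)) := by
          refine Finset.sum_le_sum fun y _ => ?_
          exact mul_le_mul_of_nonneg_right (hinner y) (Real.exp_nonneg _)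
    _ = (K * Real.exp (lam ^ 2 * c ^ 2 / 8))
            * ∑ y : Fin m → Fin K, Real.exp (lam * (g y - Em K m g)) := by
          rw [← Finset.mul_sum]
    _ ≤ (K * Real.exp (lam ^ 2 * c ^ 2 / 8)) * ((K : ℝ) ^ m * Real.exp (m * (lam ^ 2 * c ^ 2 / 8))) := by
          refine mul_le_mul_of_nonneg_left (ih g hg) ?_
          positivity
    _ = (K : ℝ) ^ (m+1) * Real.exp ((m+1 : ℕ) * (lam ^ 2 * c ^ 2 / 8)) := by
          rw [mul_mul_mul_comm, ← Real.exp_add, ← pow_succ']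
          push_cast
          ring_nf

open Finset in
lemma tail_bound {K : ℕ} (hK : 0 < K) {m : ℕ} (hm : 0 < m) (f : (Fin m → Fin K) → ℝ)
    (c : ℝ) (hc : 0 < c)
    (hbd : ∀ (k : Fin m) (z z' : Fin m → Fin K), (∀ j, j ≠ k → z j = z' j) → f z - f z' ≤ c)
    (s : ℝ) (hs : 0 < s)
    [DecidablePred fun z : Fin m → Fin K => s ≤ f z - Em K m f] :
    (((Finset.univ.filter (fun z : Fin m → Fin K => s ≤ f z - Em K m f)).card : ℝ))
      ≤ (K : ℝ) ^ m * Real.exp (-2 * s ^ 2 / (m * c ^ 2)) := by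
  classical
  have hmR : (0:ℝ) < (m:ℝ) := by exact_mod_cast hm
  set lam := 4 * s / (m * c ^ 2) with hlamdef
  have hlam : 0 < lam := by positivity
  have key := mgf_bound hK c lam m f hbd
  set A := Finset.univ.filter (fun z : Fin m → Fin K => s ≤ f z - Em K m f) with hA
  have h1 : (A.card : ℝ) * Real.exp (lam * s)
      ≤ ∑ z : Fin m → Fin K, Real.exp (lam * (f z - Em K m f)) := by
    calc (A.card : ℝ) * Real.exp (lam * s) = ∑ _z ∈ A, Real.exp (lam * s) := by
          rw [Finset.sum_const, nsmul_eq_mul]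
    _ ≤ ∑ z ∈ A, Real.exp (lam * (f z - Em K m f)) := by
          refine Finset.sum_le_sum fun z hz => ?_
          have hz' : s ≤ f z - Em K m f := (Finset.mem_filter.1 hz).2
          exact Real.exp_le_exp.2 (mul_le_mul_of_nonneg_left hz' hlam.le)
    _ ≤ ∑ z : Fin m → Fin K, Real.exp (lam * (f z - Em K m f)) :=
          Finset.sum_le_sum_of_subset_of_nonneg (Finset.subset_univ A)
            (fun z _ _ => Real.exp_nonneg _)
  have h2 : (A.card : ℝ) ≤ (K:ℝ) ^ m * Real.exp (m * (lam ^ 2 * c ^ 2 / 8)) * Real.exp (-(lam * s)) := by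
    have h3 : (A.card : ℝ) = (A.card : ℝ) * Real.exp (lam * s) * Real.exp (-(lam * s)) := by
      rw [mul_assoc, ← Real.exp_add]
      simp
    rw [h3]
    exact mul_le_mul_of_nonneg_right (h1.trans key) (Real.exp_nonneg _)
  calc (A.card : ℝ) ≤ (K:ℝ) ^ m * Real.exp (m * (lam ^ 2 * c ^ 2 / 8)) * Real.exp (-(lam * s)) := h2
  _ = (K : ℝ) ^ m * Real.exp (-2 * s ^ 2 / (m * c ^ 2)) := by
      rw [mul_assoc, ← Real.exp_add]
      congr 2
      rw [hlamdef]
      field_simp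
      ring

lemma sum_eval {ι β E : Type*} [Fintype ι] [Fintype β] [DecidableEq ι] [AddCommMonoid E]
    (u : ι) (g : β → E) :
    ∑ z : ι → β, g (z u) = Fintype.card ({j : ι // j ≠ u} → β) • ∑ i : β, g i := by
  rw [← Equiv.sum_comp (Equiv.funSplitAt u β).symm (fun z => g (z u))]
  rw [Fintype.sum_prod_type]
  have hcoord : ∀ (x : β) (w : {j : ι // j ≠ u} → β), (Equiv.funSplitAt u β).symm (x, w) u = x := by
    intro x w
    simp
  have : ∀ x : β, ∑ w : {j : ι // j ≠ u} → β, g ((Equiv.funSplitAt u β).symm (x, w) u)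
      = Fintype.card ({j : ι // j ≠ u} → β) • g x := by
    intro x
    simp_rw [hcoord]
    rw [Finset.sum_const, Finset.card_univ]
  simp_rw [this]
  rw [← Finset.smul_sum]

lemma prob_eq {N M : ℕ} (Ω : Type*) [MeasurableSpace Ω] (μ : Measure Ω)
    [IsProbabilityMeasure μ] (Z : Fin M → Ω → Fin N) (hmeas : ∀ u, Measurable (Z u))
    (hindep : iIndepFun Z μ)
    (hunif : ∀ u (i : Fin N), μ (Z u ⁻¹' {i}) = (N : ENNReal)⁻¹)
    (P : (Fin M → Fin N) → Prop) [DecidablePred P] :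
    μ {ω | P (fun u => Z u ω)} =
      ((Finset.univ.filter P).card : ENNReal) * ((N : ENNReal)⁻¹) ^ M := by
  classical
  have hset : {ω | P (fun u => Z u ω)}
      = ⋃ z ∈ Finset.univ.filter P, ⋂ u, Z u ⁻¹' {z u} := by
    ext ω
    simp only [Set.mem_setOf_eq, Set.mem_iUnion, Set.mem_iInter, Set.mem_preimage,
      Set.mem_singleton_iff, Finset.mem_filter, Finset.mem_univ, true_and]
    constructor
    · intro h
      exact ⟨fun u => Z u ω, h, fun u => rfl⟩
    · rintro ⟨z, hz, hag⟩
      have : (fun u => Z u ω) = z := funext hag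
      rwa [this]
  rw [hset]
  have hatomMeas : ∀ z : Fin M → Fin N, MeasurableSet (⋂ u, Z u ⁻¹' {z u}) :=
    fun z => MeasurableSet.iInter fun u => (hmeas u) (measurableSet_singleton _)
  rw [measure_biUnion_finset ?_ (fun z _ => hatomMeas z)]
  · have hatom : ∀ z : Fin M → Fin N, μ (⋂ u, Z u ⁻¹' {z u}) = ((N : ENNReal)⁻¹) ^ M := by
      intro z
      rw [hindep.meas_iInter (fun u => ⟨{z u}, measurableSet_singleton _, rfl⟩)]
      simp [hunif]
    rw [Finset.sum_congr rfl fun z _ => hatom z, Finset.sum_const, nsmul_eq_mul]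
  · intro z hz z' hz' hne
    refine Set.disjoint_left.2 fun ω hω hω' => hne ?_
    simp only [Set.mem_iInter, Set.mem_preimage, Set.mem_singleton_iff] at hω hω'
    exact funext fun u => (hω u).symm.trans (hω' u)

set_option maxHeartbeats 2000000 in
lemma arith_main (n : ℕ) (hn : 1 ≤ n) (κ ε t L Mr : ℝ)
    (hκ : 0 < κ) (hε : 0 < ε) (ht0 : 0 < t) (ht1 : t < 1) (hM1 : 1 ≤ Mr)
    (hL : L = Real.log ((n + 1) / t))
    (hMsize : 4 * κ / ε * (2 * κ / ε + 1 / 3) * L ≤ Mr) :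
    ∃ s : ℝ, 0 < s ∧
      (∀ Emv : ℝ, 0 ≤ Emv → Emv ^ 2 ≤ κ ^ 2 / Mr → Emv + s ≤ ε) ∧
      Real.exp (-2 * s ^ 2 / (Mr * (2 * κ / Mr) ^ 2)) ≤ t := by
  have hM0 : (0:ℝ) < Mr := by linarith
  have hlog2 : (0.6931471803 : ℝ) < Real.log 2 := Real.log_two_gt_d9
  have hL2 : Real.log 2 ≤ L := by
    rw [hL]
    refine Real.log_le_log (by norm_num) ?_
    rw [le_div_iff₀ ht0]
    have hn1 : (2:ℝ) ≤ (n:ℝ) + 1 := by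
      have : (1:ℝ) ≤ (n:ℝ) := by exact_mod_cast hn
      linarith
    linarith
  have hL0 : 0 < L := lt_of_lt_of_le (by linarith) hL2
  set u : ℝ := Real.sqrt (2 * L) with hudef
  have hu2 : u ^ 2 = 2 * L := Real.sq_sqrt (by linarith)
  have hu0 : 0 < u := Real.sqrt_pos.2 (by linarith)
  have hu1 : 1 ≤ u := by nlinarith only [hu2, hu0, hL2, hlog2]
  set δ : ℝ := 1 / (2 * u) with hδdef
  have hδ0 : 0 < δ := by positivity
  have hδhalf : δ ≤ 1/2 := by
    rw [hδdef, div_le_div_iff₀ (by positivity) (by norm_num)]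
    linarith
  refine ⟨ε * (1 - δ), by nlinarith only [hε, hδhalf], ?_, ?_⟩
  · -- mean bound
    intro Emv hEm0 hEmsq
    have hM8 : 8 * κ^2 * L / ε^2 ≤ Mr := by
      have key : 4 * κ / ε * (2 * κ / ε + 1 / 3) * L - 8 * κ^2 * L / ε^2
          = 4 * κ * L / (3 * ε) := by
        field_simp
        ring
      have hpos : (0:ℝ) ≤ 4 * κ * L / (3 * ε) := by positivity
      linarith
    have h4L : (2*u)^2 = 8 * L := by nlinarith
    have hεδ : ε^2 * δ^2 = ε^2 / (8*L) := by
      rw [hδdef, div_pow, one_pow, h4L]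
      ring
    have h1 : κ^2 / Mr ≤ ε^2 * δ^2 := by
      rw [hεδ, div_le_div_iff₀ hM0 (by positivity)]
      have h2 := mul_le_mul_of_nonneg_right hM8 (le_of_lt (by positivity : (0:ℝ) < ε^2))
      have h3 : 8 * κ^2 * L / ε^2 * ε^2 = 8 * κ^2 * L := by field_simp
      rw [h3] at h2
      linarith only [h2]
    have h2 : Emv^2 ≤ (ε*δ)^2 := by linarith only [hEmsq, h1]
    have h4 : Emv ≤ ε * δ := by nlinarith only [h2, hEm0, mul_pos hε hδ0]
    linarith only [h4]
  · -- exponential bound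
    have hM8 : 8 * κ^2 * L / ε^2 ≤ Mr := by
      have key : 4 * κ / ε * (2 * κ / ε + 1 / 3) * L - 8 * κ^2 * L / ε^2
          = 4 * κ * L / (3 * ε) := by
        field_simp
        ring
      have hpos : (0:ℝ) ≤ 4 * κ * L / (3 * ε) := by positivity
      linarith
    have hxlog : -Real.log t ≤ L - Real.log 2 := by
      have hl : L = Real.log ((n:ℝ) + 1) - Real.log t := by
        rw [hL, Real.log_div (by positivity) (ne_of_gt ht0)]
      have h2 : Real.log 2 ≤ Real.log ((n:ℝ)+1) := by
        refine Real.log_le_log (by norm_num) ?_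
        have : (1:ℝ) ≤ (n:ℝ) := by exact_mod_cast hn
        linarith
      linarith
    have hq : 4*L*(1-δ)^2 = 2*u^2 - 2*u + 1/2 := by
      have h4 : 4*L = 2*u^2 := by linarith only [hu2]
      rw [h4, hδdef]
      field_simp
      ring
    have hlog6 : (1/6 : ℝ) ≤ Real.log 2 := by linarith only [hlog2]
    have h3 : -Real.log t ≤ 4*L*(1-δ)^2 := by
      nlinarith only [hxlog, hq, hu2, sq_nonneg (u - 2/3), hlog6]
    have hkey : 2*κ^2*(-Real.log t) ≤ Mr*(ε * (1-δ))^2 := by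
      have h1 : 8*κ^2*L/ε^2 * (ε * (1-δ))^2 ≤ Mr*(ε * (1-δ))^2 :=
        mul_le_mul_of_nonneg_right hM8 (sq_nonneg _)
      have h2 : 8*κ^2*L/ε^2 * (ε * (1-δ))^2 = 8*κ^2*L*(1-δ)^2 := by
        field_simp
      rw [h2] at h1
      have h5 : 2*κ^2*(-Real.log t) ≤ 2*κ^2*(4*L*(1-δ)^2) :=
        mul_le_mul_of_nonneg_left h3 (by positivity)
      linarith only [h1, h5]
    have hceq : -2 * (ε * (1-δ))^2 / (Mr*(2*κ/Mr)^2) = -(Mr*(ε * (1-δ))^2/(2*κ^2)) := by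
      field_simp
    have harg : -2 * (ε * (1-δ))^2 / (Mr*(2*κ/Mr)^2) ≤ Real.log t := by
      rw [hceq, neg_le, le_div_iff₀ (by positivity)]
      linarith only [hkey]
    calc Real.exp (-2 * (ε * (1-δ))^2 / (Mr * (2*κ/Mr)^2)) ≤ Real.exp (Real.log t) :=
          Real.exp_le_exp.2 harg
    _ = t := Real.exp_log ht0

/-- Vector subsampling (Bernstein) bound: if `‖a_i‖ ≤ κ` in Euclidean norm,
`ā = (1/N)Σ a_i`, and `M ≥ (4κ/ε)(2κ/ε + 1/3) log((n+1)/t)`, then for i.i.d. indices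
`Z₁,…,Z_M` uniform on `{1,…,N}`, the subsampled average deviates from `ā` by at least
`ε` (in Euclidean norm) with probability at most `t`. -/
theorem stmt17 (N n : ℕ) (hN : 1 ≤ N) (hn : 1 ≤ n)
    (a : Fin N → EuclideanSpace ℝ (Fin n)) (κ : ℝ) (hκ : 0 < κ)
    (ha : ∀ i : Fin N, ‖a i‖ ≤ κ)
    (ε t : ℝ) (hε : 0 < ε) (ht0 : 0 < t) (ht1 : t < 1)
    (M : ℕ) (hM : 1 ≤ M)
    (hMsize : 4 * κ / ε * (2 * κ / ε + 1 / 3) * Real.log ((n + 1) / t) ≤ (M : ℝ))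
    (Ω : Type*) [MeasurableSpace Ω] (μ : Measure Ω) [IsProbabilityMeasure μ]
    (Z : Fin M → Ω → Fin N) (hmeas : ∀ u, Measurable (Z u))
    (hindep : iIndepFun Z μ)
    (hunif : ∀ u, Measure.map (Z u) μ =
      (@PMF.uniformOfFintype (Fin N) _ ⟨⟨0, hN⟩⟩).toMeasure) :
    μ {ω | ε ≤ ‖(M : ℝ)⁻¹ • ∑ u : Fin M, a (Z u ω)
        - (N : ℝ)⁻¹ • ∑ i : Fin N, a i‖} ≤ ENNReal.ofReal t := by
  classical
  have hN0 : (0:ℝ) < N := by exact_mod_cast hN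
  have hM0 : (0:ℝ) < M := by exact_mod_cast hM
  -- ## Setup: centered vectors
  set abar : EuclideanSpace ℝ (Fin n) := (N : ℝ)⁻¹ • ∑ i : Fin N, a i with habar
  set b : Fin N → EuclideanSpace ℝ (Fin n) := fun i => a i - abar with hbdef
  have hsuma : ∑ i : Fin N, a i = (N:ℝ) • abar := by
    rw [habar, smul_smul, mul_inv_cancel₀ (ne_of_gt hN0), one_smul]
  have hbsum : ∑ i : Fin N, b i = 0 := by
    simp only [hbdef]
    rw [Finset.sum_sub_distrib, Finset.sum_const, Finset.card_univ, Fintype.card_fin, hsuma]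
    rw [← Nat.cast_smul_eq_nsmul ℝ, sub_self]
  set F : (Fin M → Fin N) → ℝ :=
    fun z => ‖(M : ℝ)⁻¹ • ∑ u : Fin M, a (z u) - abar‖ with hFdef
  have hFform : ∀ z, F z = (M:ℝ)⁻¹ * ‖∑ u : Fin M, b (z u)‖ := by
    intro z
    have h1 : ∑ u : Fin M, b (z u) = ∑ u : Fin M, a (z u) - (M:ℝ) • abar := by
      simp only [hbdef]
      rw [Finset.sum_sub_distrib, Finset.sum_const, Finset.card_univ, Fintype.card_fin,
        ← Nat.cast_smul_eq_nsmul ℝ]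
    have h2 : (M : ℝ)⁻¹ • ∑ u : Fin M, a (z u) - abar = (M:ℝ)⁻¹ • (∑ u : Fin M, b (z u)) := by
      rw [h1, smul_sub, smul_smul, inv_mul_cancel₀ (ne_of_gt hM0), one_smul]
    simp only [hFdef]
    rw [h2, norm_smul]
    simp [abs_of_pos (inv_pos.2 hM0)]
  have hFnonneg : ∀ z, 0 ≤ F z := fun z => norm_nonneg _
  -- ## bounded differences
  set c : ℝ := 2 * κ / M with hcdef
  have hcpos : 0 < c := by positivity
  have hbd : ∀ (k : Fin M) (z z' : Fin M → Fin N),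
      (∀ j, j ≠ k → z j = z' j) → F z - F z' ≤ c := by
    intro k z z' hzz
    rw [hFform, hFform]
    have hdiff : ∑ u : Fin M, b (z u) - ∑ u : Fin M, b (z' u) = a (z k) - a (z' k) := by
      rw [← Finset.sum_sub_distrib]
      rw [Finset.sum_eq_single k]
      · simp only [hbdef]; abel
      · intro u _ hu
        rw [hzz u hu, sub_self]
      · intro h; exact absurd (Finset.mem_univ k) h
    have h3 : ‖∑ u : Fin M, b (z u)‖ - ‖∑ u : Fin M, b (z' u)‖ ≤ ‖a (z k) - a (z' k)‖ := by
      rw [← hdiff]; exact norm_sub_norm_le _ _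
    have h4 : ‖a (z k) - a (z' k)‖ ≤ 2 * κ := by
      calc ‖a (z k) - a (z' k)‖ ≤ ‖a (z k)‖ + ‖a (z' k)‖ := norm_sub_le _ _
      _ ≤ 2 * κ := by linarith [ha (z k), ha (z' k)]
    have h5 : (M:ℝ)⁻¹ * ‖∑ u : Fin M, b (z u)‖ - (M:ℝ)⁻¹ * ‖∑ u : Fin M, b (z' u)‖
        = (M:ℝ)⁻¹ * (‖∑ u : Fin M, b (z u)‖ - ‖∑ u : Fin M, b (z' u)‖) := by ring
    rw [h5, hcdef]
    rw [show (2 * κ / M : ℝ) = (M:ℝ)⁻¹ * (2 * κ) by field_simp]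
    exact mul_le_mul_of_nonneg_left (h3.trans h4) (inv_nonneg.2 hM0.le)
  -- ## second moment
  have hb2 : ∑ i : Fin N, ‖b i‖ ^ 2 ≤ N * κ ^ 2 := by
    have hexp : ∀ i : Fin N, ‖b i‖^2 = ‖a i‖^2 - 2 * ⟪a i, abar⟫ + ‖abar‖^2 := by
      intro i
      simp only [hbdef]
      exact norm_sub_sq_real _ _
    rw [Finset.sum_congr rfl (fun i _ => hexp i), Finset.sum_add_distrib,
      Finset.sum_sub_distrib, ← Finset.mul_sum, ← sum_inner, hsuma, real_inner_smul_left,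
      real_inner_self_eq_norm_sq, Finset.sum_const, Finset.card_univ, Fintype.card_fin,
      nsmul_eq_mul]
    have hsa : ∑ i : Fin N, ‖a i‖^2 ≤ (N:ℝ) * κ^2 := by
      calc ∑ i : Fin N, ‖a i‖^2 ≤ ∑ _i : Fin N, κ^2 :=
            Finset.sum_le_sum fun i _ => by
              have := ha i
              nlinarith [norm_nonneg (a i)]
      _ = (N:ℝ) * κ^2 := by
            rw [Finset.sum_const, Finset.card_univ, Fintype.card_fin, nsmul_eq_mul]
    nlinarith [sq_nonneg ‖abar‖, hN0]
  have hzsum : ∑ z : Fin M → Fin N, ‖∑ u : Fin M, b (z u)‖ ^ 2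
      ≤ (M:ℝ) * (N:ℝ) ^ M * κ ^ 2 := by
    have expand : ∀ z : Fin M → Fin N, ‖∑ u : Fin M, b (z u)‖ ^ 2
        = ∑ u : Fin M, ∑ v : Fin M, ⟪b (z u), b (z v)⟫ := by
      intro z
      rw [← real_inner_self_eq_norm_sq, sum_inner]
      exact Finset.sum_congr rfl fun u _ => inner_sum _ _ _
    rw [Finset.sum_congr rfl fun z _ => expand z, Finset.sum_comm]
    rw [Finset.sum_congr rfl fun (u : Fin M) _ =>
      Finset.sum_comm (s := (Finset.univ : Finset (Fin M → Fin N)))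
        (t := (Finset.univ : Finset (Fin M)))]
    have hcard : ∀ u : Fin M, (Fintype.card ({j : Fin M // j ≠ u} → Fin N)) = N ^ (M-1) := by
      intro u
      rw [Fintype.card_fun, Fintype.card_fin]
      congr 1
      rw [Fintype.card_subtype_compl]
      simp
    have hdiag : ∀ u : Fin M, ∑ z : Fin M → Fin N, ⟪b (z u), b (z u)⟫
        = ((N:ℝ)) ^ (M-1) * ∑ i : Fin N, ‖b i‖^2 := by
      intro u
      rw [sum_eval u (fun i => ⟪b i, b i⟫), nsmul_eq_mul, hcard u]
      push_cast
      congr 1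
      exact Finset.sum_congr rfl fun i _ => real_inner_self_eq_norm_sq _
    have hcross : ∀ u v : Fin M, u ≠ v → ∑ z : Fin M → Fin N, ⟪b (z u), b (z v)⟫ = 0 := by
      intro u v huv
      rw [← Equiv.sum_comp (Equiv.funSplitAt u (Fin N)).symm
        (fun z => ⟪b (z u), b (z v)⟫), Fintype.sum_prod_type]
      have h1 : ∀ (x : Fin N) (w : {j : Fin M // j ≠ u} → Fin N),
          (Equiv.funSplitAt u (Fin N)).symm (x, w) u = x := by intro x w; simp
      have h2 : ∀ (x : Fin N) (w : {j : Fin M // j ≠ u} → Fin N),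
          (Equiv.funSplitAt u (Fin N)).symm (x, w) v = w ⟨v, Ne.symm huv⟩ := by
        intro x w
        simp [Equiv.funSplitAt_symm_apply, dif_neg (Ne.symm huv)]
      calc ∑ x : Fin N, ∑ w : {j : Fin M // j ≠ u} → Fin N,
            ⟪b ((Equiv.funSplitAt u (Fin N)).symm (x, w) u),
              b ((Equiv.funSplitAt u (Fin N)).symm (x, w) v)⟫
          = ∑ x : Fin N, ⟪b x, ∑ w : {j : Fin M // j ≠ u} → Fin N, b (w ⟨v, Ne.symm huv⟩)⟫ := by
            refine Finset.sum_congr rfl fun x _ => ?_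
            rw [inner_sum]
            exact Finset.sum_congr rfl fun w _ => by rw [h1, h2]
      _ = 0 := by
            have hz : ∑ w : {j : Fin M // j ≠ u} → Fin N, b (w ⟨v, Ne.symm huv⟩) = 0 := by
              rw [sum_eval (⟨v, Ne.symm huv⟩ : {j : Fin M // j ≠ u}) b, hbsum, smul_zero]
            rw [hz]
            simp
    have hrow : ∀ u : Fin M, ∑ v : Fin M, ∑ z : Fin M → Fin N, ⟪b (z u), b (z v)⟫
        = ((N:ℝ)) ^ (M-1) * ∑ i : Fin N, ‖b i‖^2 := by
      intro u
      rw [Finset.sum_eq_single u (fun v _ hv => hcross u v (Ne.symm hv))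
        (fun h => absurd (Finset.mem_univ u) h)]
      exact hdiag u
    rw [Finset.sum_congr rfl fun u _ => hrow u, Finset.sum_const, Finset.card_univ,
      Fintype.card_fin, nsmul_eq_mul]
    have hNpow : ((N:ℝ)) ^ (M-1) * (N:ℝ) = (N:ℝ) ^ M := by
      rw [← pow_succ, Nat.sub_add_cancel hM]
    calc (M:ℝ) * ((N:ℝ) ^ (M-1) * ∑ i : Fin N, ‖b i‖^2)
        ≤ (M:ℝ) * ((N:ℝ) ^ (M-1) * ((N:ℝ) * κ^2)) := by
          refine mul_le_mul_of_nonneg_left (mul_le_mul_of_nonneg_left hb2 (by positivity)) hM0.le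
    _ = (M:ℝ) * (N:ℝ) ^ M * κ ^ 2 := by rw [← mul_assoc, mul_assoc ((M:ℝ)) _ _, ← hNpow]; ring
  -- ## mean bound
  have hEmnonneg : 0 ≤ Em N M F :=
    div_nonneg (Finset.sum_nonneg fun z _ => hFnonneg z) (by positivity)
  have hEmsq : (Em N M F)^2 ≤ κ^2 / M := by
    have h1 : (∑ z : Fin M → Fin N, F z)^2 ≤ (N:ℝ)^M * ∑ z : Fin M → Fin N, (F z)^2 := by
      have h := sq_sum_le_card_mul_sum_sq (s := (Finset.univ : Finset (Fin M → Fin N))) (f := F)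
      have hc2 : ((Finset.univ : Finset (Fin M → Fin N)).card : ℝ) = (N:ℝ)^M := by
        rw [Finset.card_univ, Fintype.card_fun]
        push_cast
        simp
      rw [hc2] at h
      exact h
    have h2 : ∑ z : Fin M → Fin N, (F z)^2 ≤ (N:ℝ)^M * κ^2 / M := by
      have hFsq : ∀ z, (F z)^2 = (M:ℝ)⁻¹^2 * ‖∑ u : Fin M, b (z u)‖^2 := by
        intro z; rw [hFform]; ring
      rw [Finset.sum_congr rfl fun z _ => hFsq z, ← Finset.mul_sum]
      calc (M:ℝ)⁻¹^2 * ∑ z : Fin M → Fin N, ‖∑ u : Fin M, b (z u)‖^2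
          ≤ (M:ℝ)⁻¹^2 * ((M:ℝ) * (N:ℝ)^M * κ^2) :=
            mul_le_mul_of_nonneg_left hzsum (by positivity)
      _ = (N:ℝ)^M * κ^2 / M := by field_simp
    simp only [Em]
    rw [div_pow, div_le_div_iff₀ (by positivity) hM0]
    have h3 := h1.trans (mul_le_mul_of_nonneg_left h2 (by positivity))
    have hNM : (0:ℝ) < (N:ℝ)^M := by positivity
    calc (∑ z : Fin M → Fin N, F z)^2 * M ≤ ((N:ℝ)^M * ((N:ℝ)^M * κ^2 / M)) * M := by
          exact mul_le_mul_of_nonneg_right h3 hM0.le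
    _ = κ^2 * ((N:ℝ)^M)^2 := by field_simp
  obtain ⟨s, hs0, hmeanb, hexpt⟩ := arith_main n hn κ ε t (Real.log (((n:ℝ) + 1) / t)) M
    hκ hε ht0 ht1 (by exact_mod_cast hM) rfl hMsize
  rw [← hcdef] at hexpt
  have hmean : Em N M F + s ≤ ε := hmeanb (Em N M F) hEmnonneg hEmsq
  -- ## measure to counting
  have hunif' : ∀ u (i : Fin N), μ (Z u ⁻¹' {i}) = (N : ENNReal)⁻¹ := by
    intro v i
    haveI : Nonempty (Fin N) := ⟨⟨0, hN⟩⟩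
    have h1 : μ (Z v ⁻¹' {i}) = Measure.map (Z v) μ {i} :=
      (Measure.map_apply (hmeas v) (measurableSet_singleton i)).symm
    rw [h1, hunif v, PMF.toMeasure_apply_singleton _ _ (measurableSet_singleton i),
      PMF.uniformOfFintype_apply]
    simp
  have hgoal : μ {ω | (fun z : Fin M → Fin N => ε ≤ F z) (fun u => Z u ω)}
      = ((Finset.univ.filter (fun z : Fin M → Fin N => ε ≤ F z)).card : ENNReal)
        * ((N : ENNReal)⁻¹) ^ M :=
    prob_eq Ω μ Z hmeas hindep hunif' (fun z : Fin M → Fin N => ε ≤ F z)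
  rw [show {ω | ε ≤ ‖(M : ℝ)⁻¹ • ∑ u : Fin M, a (Z u ω) - abar‖}
      = {ω | (fun z : Fin M → Fin N => ε ≤ F z) (fun u => Z u ω)} from rfl, hgoal]
  -- ## card bound
  have hsubset : Finset.univ.filter (fun z : Fin M → Fin N => ε ≤ F z)
      ⊆ Finset.univ.filter (fun z : Fin M → Fin N => s ≤ F z - Em N M F) := by
    intro z hz
    simp only [Finset.mem_filter, Finset.mem_univ, true_and] at hz ⊢
    linarith [hmean]
  have htail := tail_bound (Nat.lt_of_lt_of_le Nat.zero_lt_one hN)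
    (Nat.lt_of_lt_of_le Nat.zero_lt_one hM) F c hcpos hbd s hs0
  have hcard1 : (((Finset.univ.filter (fun z : Fin M → Fin N => ε ≤ F z)).card) : ℝ)
      ≤ (N:ℝ)^M * Real.exp (-2 * s^2 / (M * c^2)) := by
    refine le_trans ?_ htail
    exact_mod_cast Nat.cast_le.2 (Finset.card_le_card hsubset)
  have hreal : (((Finset.univ.filter (fun z : Fin M → Fin N => ε ≤ F z)).card) : ℝ)
      * ((N:ℝ)⁻¹)^M ≤ t := by
    have h1 : (((Finset.univ.filter (fun z : Fin M → Fin N => ε ≤ F z)).card) : ℝ)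
        ≤ (N:ℝ)^M * t :=
      le_trans hcard1 (mul_le_mul_of_nonneg_left hexpt (by positivity))
    rw [inv_pow, ← div_eq_mul_inv, div_le_iff₀ (by positivity : (0:ℝ) < (N:ℝ)^M)]
    linarith
  have hconv : (((Finset.univ.filter (fun z : Fin M → Fin N => ε ≤ F z)).card) : ENNReal)
      * ((N : ENNReal)⁻¹) ^ M
      = ENNReal.ofReal ((((Finset.univ.filter (fun z : Fin M → Fin N => ε ≤ F z)).card) : ℝ)
          * ((N:ℝ)⁻¹)^M) := by
    rw [ENNReal.ofReal_mul (Nat.cast_nonneg _), ENNReal.ofReal_pow (inv_nonneg.2 hN0.le),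
      ENNReal.ofReal_inv_of_pos hN0, ENNReal.ofReal_natCast, ENNReal.ofReal_natCast]
  rw [hconv]
  exact ENNReal.ofReal_le_ofReal hreal
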